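/- The unlabeled dependency graph of a tabletop rearrangement instance with identical cylinders is a planar bipartite graph with maximum degree at most 5. -/

import Mathlib

/-- A graph is planar if it has a plane embedding: vertices map injectively to points of
the plane and each edge is realized by a simple continuous curve between the endpoints,
such that distinct edges meet only at shared endpoints and no curve passes through
another vertex. -/
def HasPlanarEmbedding {V : Type*} (G : SimpleGraph V) : Prop :=
  ∃ (f : V → ℝ × ℝ) (γ : V → V → ℝ → ℝ × ℝ),
    Function.Injective f ∧
    (∀ u v, G.Adj u v →
      ContinuousOn (γ u v) (Set.Icc 0 1) ∧ Set.InjOn (γ u v) (Set.Icc 0 1) ∧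
      γ u v 0 = f u ∧ γ u v 1 = f v) ∧
    (∀ u v u' v', G.Adj u v → G.Adj u' v' → s(u, v) ≠ s(u', v') →
      ∀ x ∈ γ u v '' Set.Icc 0 1 ∩ γ u' v' '' Set.Icc 0 1,
        (x = f u ∨ x = f v) ∧ (x = f u' ∨ x = f v')) ∧
    (∀ u v w, G.Adj u v → w ≠ u → w ≠ v → f w ∉ γ u v '' Set.Icc 0 1)

/-- The unlabeled dependency graph of an unlabeled tabletop rearrangement instance with
identical unit cylinders: a bipartite graph on the start poses (`Sum.inl`) and the goal
poses (`Sum.inr`), with an edge between a start pose and a goal pose iff the interiors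
of the corresponding unit disks intersect. -/
def unlabeledDepGraph (n : ℕ) (s g : Fin n → EuclideanSpace ℝ (Fin 2)) :
    SimpleGraph (Fin n ⊕ Fin n) where
  Adj u v := ∃ i j, ((u = Sum.inl i ∧ v = Sum.inr j) ∨ (u = Sum.inr j ∧ v = Sum.inl i)) ∧
      (Metric.ball (s i) 1 ∩ Metric.ball (g j) 1).Nonempty
  symm := by
    constructor
    rintro u v ⟨i, j, h1, h2⟩
    exact ⟨i, j, by tauto, h2⟩
  loopless := by
    constructor
    rintro u ⟨i, j, (⟨h1, h2⟩ | ⟨h1, h2⟩), -⟩ <;> rw [h1] at h2 <;> simp at h2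



open Metric

local notation "E2" => EuclideanSpace ℝ (Fin 2)

lemma tt_ball_inter {a b : E2} :
    (Metric.ball a 1 ∩ Metric.ball b 1).Nonempty ↔ dist a b < 2 := by
  constructor
  · rintro ⟨x, hx, hy⟩
    rw [mem_ball] at hx hy
    calc dist a b ≤ dist a x + dist x b := dist_triangle _ _ _
    _ < 2 := by rw [dist_comm a x] at *; rw [dist_comm x b] at *; linarith [hx, hy]
  · intro h
    refine ⟨midpoint ℝ a b, ?_, ?_⟩
    · rw [mem_ball, dist_comm, dist_left_midpoint (𝕜 := ℝ)]
      rw [Real.norm_two]; linarith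
    · rw [mem_ball, dist_comm, dist_right_midpoint (𝕜 := ℝ)]
      rw [Real.norm_two]; linarith

lemma tt_disjoint_dist {a b : E2}
    (h : Disjoint (Metric.ball a 1) (Metric.ball b 1)) : 2 ≤ dist a b := by
  by_contra hlt
  push_neg at hlt
  obtain ⟨x, hx, hy⟩ := tt_ball_inter.mpr hlt
  exact (Set.disjoint_left.mp h hx) hy


lemma tt_seg_cross {a b c d p : E2} (hac : 2 ≤ dist a c) (hbd : 2 ≤ dist b d)
    (hab : dist a b < 2) (hcd : dist c d < 2)
    (hp : p ∈ segment ℝ a b) (hq : p ∈ segment ℝ c d) : False := by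
  have e1 := dist_add_dist_of_mem_segment hp
  have e2 := dist_add_dist_of_mem_segment hq
  have t1 := dist_triangle a p c
  have t2 := dist_triangle b p d
  rw [dist_comm p c] at t1
  rw [dist_comm b p] at t2
  linarith

lemma tt_seg_through {a b q : E2} (hab : dist a b < 2) (hq : q ∈ segment ℝ a b) :
    dist a q < 2 ∧ dist q b < 2 := by
  have e1 := dist_add_dist_of_mem_segment hq
  constructor <;> linarith [dist_nonneg (x := a) (y := q), dist_nonneg (x := q) (y := b)]

lemma tt_seg_shared {a b c p : E2} (hbc : 2 ≤ dist b c)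
    (hab : dist a b < 2) (hac : dist a c < 2)
    (hp : p ∈ segment ℝ a b) (hq : p ∈ segment ℝ a c) : p = a := by
  rw [segment_eq_image'] at hp hq
  obtain ⟨t, ht, rfl⟩ := hp
  obtain ⟨t', ht', he⟩ := hq
  by_contra hne
  have htpos : 0 < t := by
    rcases lt_or_eq_of_le ht.1 with h | h
    · exact h
    · exfalso; apply hne; rw [← h]; simp
  have ht'pos : 0 < t' := by
    rcases lt_or_eq_of_le ht'.1 with h | h
    · exact h
    · exfalso; apply hne; rw [← he, ← h]; simp
  -- t' • (c - a) = t • (b - a)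
  have hkey : t' • (c - a) = t • (b - a) := by
    have : a + t' • (c - a) = a + t • (b - a) := he
    exact (add_right_inj a).mp this
  set r : ℝ := t / t' with hr
  have hrpos : 0 < r := div_pos htpos ht'pos
  have hca : c - a = r • (b - a) := by
    have := congrArg (fun x => (t'⁻¹ : ℝ) • x) hkey
    simp only [smul_smul, inv_mul_cancel₀ (ne_of_gt ht'pos), one_smul] at this
    rw [this, hr, div_eq_inv_mul, mul_comm]
  have hw : ‖b - a‖ < 2 := by rw [← dist_eq_norm, dist_comm]; exact hab
  have hwnn : 0 ≤ ‖b - a‖ := norm_nonneg _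
  have hrw : r * ‖b - a‖ < 2 := by
    have : ‖c - a‖ = r * ‖b - a‖ := by
      rw [hca, norm_smul, Real.norm_eq_abs, abs_of_pos hrpos]
    rw [← this, ← dist_eq_norm, dist_comm]; exact hac
  have hbc2 : dist b c = |1 - r| * ‖b - a‖ := by
    rw [dist_eq_norm]
    have : b - c = (b - a) - (c - a) := by abel
    rw [this, hca]
    rw [show b - a - r • (b - a) = (1 - r) • (b - a) by rw [sub_smul, one_smul]]
    rw [norm_smul, Real.norm_eq_abs]
  rcases le_or_gt r 1 with h1 | h1
  · rw [abs_of_nonneg (by linarith)] at hbc2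
    nlinarith
  · rw [abs_of_neg (by linarith)] at hbc2
    nlinarith

open Real Complex

-- cosine bound: if angular difference is small mod 2π, points are close
lemma tt_cos_ge {x : ℝ} (hx : |x| < 2 * π) (h : |x| ≤ π / 3 ∨ 5 * π / 3 ≤ |x|) :
    1 / 2 ≤ Real.cos x := by
  have hpi := Real.pi_pos
  rw [← Real.cos_abs]
  rcases h with h | h
  · have := Real.cos_le_cos_of_nonneg_of_le_pi (abs_nonneg x) (by linarith) h
    rw [Real.cos_pi_div_three] at this; linarith
  · have h2 : Real.cos |x| = Real.cos (2 * π - |x|) := (Real.cos_two_pi_sub _).symm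
    rw [h2]
    have := Real.cos_le_cos_of_nonneg_of_le_pi (by linarith : (0:ℝ) ≤ 2*π - |x|)
      (by linarith : π/3 ≤ π) (by linarith)
    rw [Real.cos_pi_div_three] at this; linarith

lemma tt_dist_sq (z w : ℂ) :
    ‖z - w‖ ^ 2 = ‖z‖ ^ 2 + ‖w‖ ^ 2
      - 2 * ‖z‖ * ‖w‖ * Real.cos (z.arg - w.arg) := by
  set r1 := ‖z‖
  set r2 := ‖w‖
  set t1 := z.arg
  set t2 := w.arg
  have hz : z = (r1 : ℂ) * Complex.exp (t1 * I) := (Complex.norm_mul_exp_arg_mul_I z).symm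
  have hw : w = (r2 : ℂ) * Complex.exp (t2 * I) := (Complex.norm_mul_exp_arg_mul_I w).symm
  have hre : (z - w).re = r1 * Real.cos t1 - r2 * Real.cos t2 := by
    rw [Complex.sub_re, hz, hw]; simp [Complex.exp_mul_I, Complex.cos_ofReal_re]
  have him : (z - w).im = r1 * Real.sin t1 - r2 * Real.sin t2 := by
    rw [Complex.sub_im, hz, hw]; simp [Complex.exp_mul_I, Complex.sin_ofReal_re]
  have hsq : ‖z - w‖ ^ 2 = (z - w).re ^ 2 + (z - w).im ^ 2 := by
    rw [Complex.sq_norm, Complex.normSq_apply]; ring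
  rw [hsq, hre, him, Real.cos_sub]
  have h1 := Real.sin_sq_add_cos_sq t1
  have h2 := Real.sin_sq_add_cos_sq t2
  nlinarith [h1, h2]

lemma tt_no_six (q : Fin 6 → ℂ) (hlt : ∀ k, ‖q k‖ < 2)
    (hge : ∀ k l, k ≠ l → 2 ≤ ‖q k - q l‖) : False := by
  have hpi := Real.pi_pos
  -- pairwise angular separation
  have key : ∀ k l, k ≠ l → π / 3 < |(q k).arg - (q l).arg| ∧
      |(q k).arg - (q l).arg| < 5 * π / 3 := by
    intro k l hkl
    by_contra hcon
    have habs : |(q k).arg - (q l).arg| < 2 * π := by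
      have h1 := Complex.neg_pi_lt_arg (q k)
      have h2 := Complex.arg_le_pi (q k)
      have h3 := Complex.neg_pi_lt_arg (q l)
      have h4 := Complex.arg_le_pi (q l)
      rw [abs_lt]; constructor <;> linarith
    have hc : |(q k).arg - (q l).arg| ≤ π/3 ∨ 5*π/3 ≤ |(q k).arg - (q l).arg| := by
      by_contra h; push_neg at h; exact hcon ⟨h.1, h.2⟩
    have hcos := tt_cos_ge habs hc
    have hd := tt_dist_sq (q k) (q l)
    have h2 := hge k l hkl
    have h4 : (4:ℝ) ≤ ‖q k - q l‖ ^ 2 := by nlinarith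
    have r1nn := norm_nonneg (q k)
    have r2nn := norm_nonneg (q l)
    have r1lt := hlt k
    have r2lt := hlt l
    nlinarith [mul_pos (by linarith : (0:ℝ) < 2 - ‖q k‖)
        (by linarith : (0:ℝ) < 2 - ‖q l‖),
      sq_nonneg (‖q k‖ - ‖q l‖),
      mul_nonneg r1nn r2nn]
  -- six angles pairwise separated by > π/3 in a circle: contradiction
  have hinj : Function.Injective fun k => (q k).arg := by
    intro k l h
    have h' : (q k).arg = (q l).arg := h
    by_contra hkl
    have := (key k l hkl).1
    rw [h'] at this
    simp at this; linarith
  set A : Finset ℝ := Finset.image (fun k => (q k).arg) Finset.univ with hA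
  have hcard : A.card = 6 := by
    rw [hA, Finset.card_image_of_injective _ hinj, Finset.card_univ, Fintype.card_fin]
  set ψ := A.orderIsoOfFin hcard with hψ
  have hmono : ∀ k l : Fin 6, k < l → (ψ k : ℝ) < (ψ l : ℝ) := by
    intro k l h
    exact_mod_cast ψ.strictMono h
  have hpair : ∀ k l : Fin 6, k < l → π/3 < (ψ l : ℝ) - (ψ k : ℝ) ∧
      (ψ l : ℝ) - (ψ k : ℝ) < 5*π/3 := by
    intro k l h
    have hmem1 : (ψ k : ℝ) ∈ A := (ψ k).2
    have hmem2 : (ψ l : ℝ) ∈ A := (ψ l).2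
    obtain ⟨k', -, hk'⟩ := Finset.mem_image.mp hmem1
    obtain ⟨l', -, hl'⟩ := Finset.mem_image.mp hmem2
    have hne : k' ≠ l' := by
      intro he
      rw [he, hl'] at hk'
      exact absurd hk' (ne_of_gt (hmono k l h))
    have := key l' k' (Ne.symm hne)
    rw [hk', hl'] at this
    rw [abs_of_pos (by linarith [hmono k l h])] at this
    exact this
  have g01 := hpair 0 1 (by decide)
  have g12 := hpair 1 2 (by decide)
  have g23 := hpair 2 3 (by decide)
  have g34 := hpair 3 4 (by decide)
  have g45 := hpair 4 5 (by decide)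
  have g05 := hpair 0 5 (by decide)
  linarith [g01.1, g12.1, g23.1, g34.1, g45.1, g05.2]

lemma tt_dist_cabs (x y : E2) :
    dist x y = ‖(⟨x 0 - y 0, x 1 - y 1⟩ : ℂ)‖ := by
  rw [EuclideanSpace.dist_eq, Complex.norm_def, Complex.normSq_mk]
  congr 1
  rw [Fin.sum_univ_two]
  simp [Real.dist_eq, sq_abs]
  ring

lemma tt_no_six_E (c : E2) (p : Fin 6 → E2) (hlt : ∀ k, dist c (p k) < 2)
    (hge : ∀ k l, k ≠ l → 2 ≤ dist (p k) (p l)) : False := by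
  apply tt_no_six (fun k => ⟨p k 0 - c 0, p k 1 - c 1⟩)
  · intro k
    have : ‖(⟨p k 0 - c 0, p k 1 - c 1⟩ : ℂ)‖ = dist (p k) c := (tt_dist_cabs _ _).symm
    rw [this, dist_comm]
    exact hlt k
  · intro k l hkl
    have he : (⟨p k 0 - c 0, p k 1 - c 1⟩ : ℂ) - ⟨p l 0 - c 0, p l 1 - c 1⟩
        = ⟨p k 0 - p l 0, p k 1 - p l 1⟩ := by
      apply Complex.ext <;> simp <;> ring
    rw [he, ← tt_dist_cabs]
    exact hge k l hkl

lemma tt_card_le_five {n : ℕ} (c : E2) (p : Fin n → E2)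
    (hp : ∀ i j, i ≠ j → 2 ≤ dist (p i) (p j)) :
    {j | dist c (p j) < 2}.ncard ≤ 5 := by
  classical
  have hset : {j | dist c (p j) < 2} =
      ↑(Finset.univ.filter fun j => dist c (p j) < 2) := by
    ext j; simp
  rw [hset, Set.ncard_coe_finset]
  by_contra h
  push_neg at h
  obtain ⟨t, hts, htc⟩ := Finset.exists_subset_card_eq h
  have e := t.equivFinOfCardEq htc
  apply tt_no_six_E c (fun k => p ((e.symm k : { x // x ∈ t }) : Fin n))
  · intro k
    have hm : ((e.symm k : { x // x ∈ t }) : Fin n) ∈ t := (e.symm k).2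
    have := hts hm
    simp only [Finset.mem_filter] at this
    exact this.2
  · intro k l hkl
    apply hp
    intro hc
    apply hkl
    have : (e.symm k : { x // x ∈ t }) = e.symm l := Subtype.ext hc
    simpa using congrArg e this


lemma tt_phi_inj : ∀ x y : E2, x 0 = y 0 → x 1 = y 1 → x = y := by
  intro x y h0 h1
  apply PiLp.ext
  intro i
  fin_cases i <;> assumption

lemma tt_planar_core (n : ℕ) (s g' : Fin n → E2)
    (hs2 : ∀ i i', i ≠ i' → 2 ≤ dist (s i) (s i'))
    (hg2 : ∀ j j', j ≠ j' → 2 ≤ dist (g' j) (g' j'))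
    (hne : ∀ i j, s i ≠ g' j)
    (G : SimpleGraph (Fin n ⊕ Fin n))
    (hGadj : ∀ u v, G.Adj u v → ∃ i j,
      ((u = Sum.inl i ∧ v = Sum.inr j) ∨ (u = Sum.inr j ∧ v = Sum.inl i)) ∧
      dist (s i) (g' j) < 2) :
    HasPlanarEmbedding G := by
  classical
  set c : Fin n ⊕ Fin n → E2 := Sum.elim s g' with hc
  have hcinj : Function.Injective c := by
    rintro (i | i) (i' | i') h <;> simp only [hc, Sum.elim_inl, Sum.elim_inr] at h
    · congr 1
      by_contra hne'
      have := hs2 i i' hne'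
      rw [h, dist_self] at this; linarith
    · exact absurd h (hne i i')
    · exact absurd h.symm (hne i' i)
    · congr 1
      by_contra hne'
      have := hg2 i i' hne'
      rw [h, dist_self] at this; linarith
  refine ⟨fun w => (c w 0, c w 1),
    fun u v r => ((1-r) * c u 0 + r * c v 0, (1-r) * c u 1 + r * c v 1),
    ?_, ?_, ?_, ?_⟩
  · -- injectivity of f
    intro x y h
    exact hcinj (tt_phi_inj _ _ (congrArg Prod.fst h) (congrArg Prod.snd h))
  · -- curves
    intro u v hadj
    refine ⟨(Continuous.continuousOn (by fun_prop)), ?_, by norm_num, by norm_num⟩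
    intro r hr r' hr' he
    have h0 : ((1-r) • c u + r • c v : E2) 0 = ((1-r') • c u + r' • c v : E2) 0 :=
      congrArg Prod.fst he
    have h1 : ((1-r) • c u + r • c v : E2) 1 = ((1-r') • c u + r' • c v : E2) 1 :=
      congrArg Prod.snd he
    have hE : ((1-r) • c u + r • c v : E2) = (1-r') • c u + r' • c v :=
      tt_phi_inj _ _ h0 h1
    have hd : (r' - r) • (c v - c u) = 0 := by
      have h2 : (r' - r) • (c v - c u)
          = ((1-r') • c u + r' • c v) - ((1-r) • c u + r • c v) := by
        module
      rw [h2, ← hE, sub_self]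
    rcases smul_eq_zero.mp hd with h3 | h3
    · exact (sub_eq_zero.mp h3).symm
    · exfalso
      have : c v = c u := sub_eq_zero.mp h3
      exact G.ne_of_adj hadj (hcinj this).symm
  · -- distinct edges intersect only at shared endpoints
    rintro u v u' v' h h' hnedge x ⟨⟨r, hr, hx⟩, ⟨r', hr', hx'⟩⟩
    obtain ⟨i, j, hor, hlen⟩ := hGadj u v h
    obtain ⟨i', j', hor', hlen'⟩ := hGadj u' v' h'
    set p : E2 := (1-r) • c u + r • c v with hp
    set p' : E2 := (1-r') • c u + r' • c v' with hp'2
    have hpp' : p = (1-r') • c u' + r' • c v' := by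
      apply tt_phi_inj
      · exact (congrArg Prod.fst (hx.trans hx'.symm))
      · exact (congrArg Prod.snd (hx.trans hx'.symm))
    have hpseg : p ∈ segment ℝ (c u) (c v) :=
      ⟨1-r, r, by linarith [hr.1, hr.2], hr.1, by ring, rfl⟩
    have hpseg' : p ∈ segment ℝ (c u') (c v') := by
      rw [hpp']
      exact ⟨1-r', r', by linarith [hr'.1, hr'.2], hr'.1, by ring, rfl⟩
    have hcu : ∀ (a : Fin n ⊕ Fin n), c a = Sum.elim s g' a := fun _ => rfl
    -- normalize: p lies in segment from s i to g' j
    have hseg1 : p ∈ segment ℝ (s i) (g' j) := by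
      rcases hor with ⟨rfl, rfl⟩ | ⟨rfl, rfl⟩
      · exact hpseg
      · rw [segment_symm]; exact hpseg
    have hseg2 : p ∈ segment ℝ (s i') (g' j') := by
      rcases hor' with ⟨rfl, rfl⟩ | ⟨rfl, rfl⟩
      · exact hpseg'
      · rw [segment_symm]; exact hpseg'
    have hxp : x = (p 0, p 1) := hx.symm
    by_cases hii : i = i'
    · subst hii
      by_cases hjj : j = j'
      · subst hjj
        exfalso
        apply hnedge
        have e1 : s(u, v) = s(Sum.inl i, Sum.inr j) := by
          rcases hor with ⟨rfl, rfl⟩ | ⟨rfl, rfl⟩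
          · rfl
          · exact Sym2.eq_swap
        have e2 : s(u', v') = s(Sum.inl i, Sum.inr j) := by
          rcases hor' with ⟨rfl, rfl⟩ | ⟨rfl, rfl⟩
          · rfl
          · exact Sym2.eq_swap
        rw [e1, e2]
      · -- shared start s i
        have hps : p = s i := tt_seg_shared (hg2 j j' hjj) hlen hlen' hseg1 hseg2
        have hxf : x = (s i 0, s i 1) := by rw [hxp, hps]
        constructor
        · rcases hor with ⟨rfl, rfl⟩ | ⟨rfl, rfl⟩
          · left; exact hxf
          · right; exact hxf
        · rcases hor' with ⟨rfl, rfl⟩ | ⟨rfl, rfl⟩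
          · left; exact hxf
          · right; exact hxf
    · by_cases hjj : j = j'
      · subst hjj
        -- shared goal g' j
        have hseg1' : p ∈ segment ℝ (g' j) (s i) := by rw [segment_symm]; exact hseg1
        have hseg2' : p ∈ segment ℝ (g' j) (s i') := by rw [segment_symm]; exact hseg2
        have hps : p = g' j := tt_seg_shared (hs2 i i' hii)
          (by rw [dist_comm]; exact hlen) (by rw [dist_comm]; exact hlen') hseg1' hseg2'
        have hxf : x = (g' j 0, g' j 1) := by rw [hxp, hps]
        constructor
        · rcases hor with ⟨rfl, rfl⟩ | ⟨rfl, rfl⟩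
          · right; exact hxf
          · left; exact hxf
        · rcases hor' with ⟨rfl, rfl⟩ | ⟨rfl, rfl⟩
          · right; exact hxf
          · left; exact hxf
      · exact (tt_seg_cross (hs2 i i' hii) (hg2 j j' hjj) hlen hlen' hseg1 hseg2).elim
  · -- no vertex on a curve
    rintro u v w hadj hwu hwv ⟨r, hr, hx⟩
    obtain ⟨i, j, hor, hlen⟩ := hGadj u v hadj
    set p : E2 := (1-r) • c u + r • c v with hp
    have hcw : c w = p := by
      apply tt_phi_inj
      · exact (congrArg Prod.fst hx.symm)
      · exact (congrArg Prod.snd hx.symm)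
    have hpseg : p ∈ segment ℝ (c u) (c v) :=
      ⟨1-r, r, by linarith [hr.1, hr.2], hr.1, by ring, rfl⟩
    have hseg1 : p ∈ segment ℝ (s i) (g' j) := by
      rcases hor with ⟨rfl, rfl⟩ | ⟨rfl, rfl⟩
      · exact hpseg
      · rw [segment_symm]; exact hpseg
    obtain ⟨hd1, hd2⟩ := tt_seg_through hlen hseg1
    have hwi : w ≠ Sum.inl i := by
      rcases hor with ⟨rfl, rfl⟩ | ⟨rfl, rfl⟩
      · exact hwu
      · exact hwv
    have hwj : w ≠ Sum.inr j := by
      rcases hor with ⟨rfl, rfl⟩ | ⟨rfl, rfl⟩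
      · exact hwv
      · exact hwu
    cases w with
    | inl i'' =>
      have hii : i'' ≠ i := fun he => hwi (by rw [he])
      have h2 := hs2 i i'' (Ne.symm hii)
      have : c (Sum.inl i'') = s i'' := rfl
      rw [this] at hcw
      rw [hcw] at h2
      linarith
    | inr j'' =>
      have hjj : j'' ≠ j := fun he => hwj (by rw [he])
      have h2 := hg2 j j'' (Ne.symm hjj)
      have : c (Sum.inr j'') = g' j'' := rfl
      rw [this] at hcw
      rw [hcw, dist_comm] at h2
      linarith

/-- The unlabeled dependency graph of a tabletop rearrangement instance
with identical (unit) cylinders — each of the start and goal arrangements consisting of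
pairwise non-overlapping unit disks — is a planar bipartite graph with maximum degree
at most `5`. -/
theorem unlabeledDepGraph_planar_bipartite_maxDegree_le_five (n : ℕ)
    (s g : Fin n → EuclideanSpace ℝ (Fin 2))
    (hs : Pairwise fun i j => Disjoint (Metric.ball (s i) 1) (Metric.ball (s j) 1))
    (hg : Pairwise fun i j => Disjoint (Metric.ball (g i) 1) (Metric.ball (g j) 1)) :
    HasPlanarEmbedding (unlabeledDepGraph n s g) ∧
    (unlabeledDepGraph n s g).Colorable 2 ∧
    (∀ v, {w | (unlabeledDepGraph n s g).Adj v w}.ncard ≤ 5) := by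
  classical
  have hs2 : ∀ i i', i ≠ i' → 2 ≤ dist (s i) (s i') := fun i i' h => tt_disjoint_dist (hs h)
  have hg2 : ∀ j j', j ≠ j' → 2 ≤ dist (g j) (g j') := fun j j' h => tt_disjoint_dist (hg h)
  have hadj : ∀ u v, (unlabeledDepGraph n s g).Adj u v ↔
      ∃ i j, ((u = Sum.inl i ∧ v = Sum.inr j) ∨ (u = Sum.inr j ∧ v = Sum.inl i)) ∧
        dist (s i) (g j) < 2 := by
    intro u v
    constructor
    · rintro ⟨i, j, hor, hne⟩; exact ⟨i, j, hor, tt_ball_inter.mp hne⟩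
    · rintro ⟨i, j, hor, hlt⟩; exact ⟨i, j, hor, tt_ball_inter.mpr hlt⟩
  refine ⟨?_, ?_, ?_⟩
  · -- planarity: perturb the goal positions
    set F : Finset (Fin n × Fin n) :=
      Finset.univ.filter (fun p => dist (s p.1) (g p.2) < 2) with hF
    set D : Finset ℝ := insert 1 (F.image fun p => 2 - dist (s p.1) (g p.2)) with hD
    have hDne : D.Nonempty := ⟨1, Finset.mem_insert_self _ _⟩
    set δ := D.min' hDne with hδ
    have hδpos : 0 < δ := by
      have hm := D.min'_mem hDne
      rw [← hδ] at hm
      rcases Finset.mem_insert.mp hm with h | h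
      · rw [h]; norm_num
      · obtain ⟨p, hp, he⟩ := Finset.mem_image.mp h
        have := (Finset.mem_filter.mp hp).2
        rw [← he]; linarith
    have hδle : ∀ i j, dist (s i) (g j) < 2 → δ ≤ 2 - dist (s i) (g j) := by
      intro i j hij
      apply Finset.min'_le
      apply Finset.mem_insert_of_mem
      exact Finset.mem_image.mpr ⟨(i,j), Finset.mem_filter.mpr ⟨Finset.mem_univ _, hij⟩, rfl⟩
    have hbadfin : (Set.range fun p : Fin n × Fin n => (s p.1 - g p.2) 0).Finite :=
      Set.finite_range _
    obtain ⟨t, ⟨⟨ht0, htδ⟩, htbad⟩⟩ :=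
      ((Set.Ioo_infinite hδpos).diff hbadfin).nonempty
    set u0 : E2 := EuclideanSpace.single 0 (1:ℝ) with hu0
    set vsh : E2 := t • u0 with hvsh
    have hvnorm : ‖vsh‖ = t := by
      rw [hvsh, norm_smul, hu0, EuclideanSpace.norm_single, norm_one,
        Real.norm_eq_abs, abs_of_pos ht0, mul_one]
    set g' : Fin n → E2 := fun j => g j + vsh with hg'
    have hshift_ne : ∀ i j, s i ≠ g' j := by
      intro i j he
      apply htbad
      refine ⟨(i, j), ?_⟩
      have h1 : s i - g j = vsh := by rw [he, hg']; module
      have h2 : vsh 0 = t := by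
        rw [hvsh, hu0]
        simp [EuclideanSpace.single_apply]
      show (s (i,j).1 - g (i,j).2) 0 = t
      rw [h1, h2]
    have hgg' : ∀ j j', j ≠ j' → 2 ≤ dist (g' j) (g' j') := by
      intro j j' h
      have he : dist (g' j) (g' j') = dist (g j) (g j') := by
        rw [hg']
        simp only [dist_eq_norm]
        congr 1
        module
      rw [he]; exact hg2 j j' h
    have hsg' : ∀ i j, dist (s i) (g j) < 2 → dist (s i) (g' j) < 2 := by
      intro i j h
      have h1 : dist (g j) (g' j) = t := by
        rw [hg', dist_self_add_right, hvnorm]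
      have h2 := hδle i j h
      calc dist (s i) (g' j) ≤ dist (s i) (g j) + dist (g j) (g' j) := dist_triangle _ _ _
      _ < 2 := by rw [h1]; linarith
    apply tt_planar_core n s g' hs2 hgg' hshift_ne
    intro u v h
    obtain ⟨i, j, hor, hlt⟩ := (hadj u v).mp h
    exact ⟨i, j, hor, hsg' i j hlt⟩
  · -- bipartite
    exact ⟨⟨Sum.elim (fun _ => 0) (fun _ => 1), by
      rintro u v ⟨i, j, (⟨rfl, rfl⟩ | ⟨rfl, rfl⟩), -⟩ <;> simp⟩⟩
  · -- max degree ≤ 5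
    intro v
    match v with
    | Sum.inl i =>
      have hset : {w | (unlabeledDepGraph n s g).Adj (Sum.inl i) w} =
          Sum.inr '' {j | dist (s i) (g j) < 2} := by
        ext w
        simp only [Set.mem_setOf_eq, Set.mem_image, hadj]
        constructor
        · rintro ⟨i', j, (⟨hi, rfl⟩ | ⟨hi, -⟩), hlt⟩
          · cases Sum.inl.inj hi; exact ⟨j, hlt, rfl⟩
          · exact absurd hi (by simp)
        · rintro ⟨j, hlt, rfl⟩
          exact ⟨i, j, Or.inl ⟨rfl, rfl⟩, hlt⟩
      rw [hset, Set.ncard_image_of_injective _ Sum.inr_injective]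
      exact tt_card_le_five (s i) g hg2
    | Sum.inr j =>
      have hset : {w | (unlabeledDepGraph n s g).Adj (Sum.inr j) w} =
          Sum.inl '' {i | dist (g j) (s i) < 2} := by
        ext w
        simp only [Set.mem_setOf_eq, Set.mem_image, hadj]
        constructor
        · rintro ⟨i, j', (⟨hi, -⟩ | ⟨hj, rfl⟩), hlt⟩
          · exact absurd hi (by simp)
          · cases Sum.inr.inj hj; exact ⟨i, by rw [dist_comm]; exact hlt, rfl⟩
        · rintro ⟨i, hlt, rfl⟩
          exact ⟨i, j, Or.inr ⟨rfl, rfl⟩, by rw [dist_comm]; exact hlt⟩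
      rw [hset, Set.ncard_image_of_injective _ Sum.inl_injective]
      exact tt_card_le_five (g j) s hs2
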